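/- Let φ be a quaternion window function with ‖φ‖₂ = 1 and f ∈ L²(ℝ², ℍ) with ‖f‖₂ = 1. If Σ ⊂ ℝ² × ℝ² is measurable and 0 ≤ ε < 1 satisfy ∬_Σ |G_φ f(ω,b)|² dω db ≥ 1 − ε, then the Lebesgue measure of Σ satisfies m(Σ) ≥ 1 − ε. -/

import Mathlib

open MeasureTheory ENNReal

noncomputable def Qi : Quaternion ℝ := ⟨0,1,0,0⟩
noncomputable def Qj : Quaternion ℝ := ⟨0,0,1,0⟩

/-- quaternion exponential `exp (t • u) = cos t + (sin t) • u` for an imaginary unit `u` -/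
noncomputable def qexp (u : Quaternion ℝ) (t : ℝ) : Quaternion ℝ :=
  ((Real.cos t : ℝ) : Quaternion ℝ) + (Real.sin t) • u

/-- the two-sided Gabor quaternion Fourier transform -/
noncomputable def GQFT (φ f : ℝ × ℝ → Quaternion ℝ) (ω b : ℝ × ℝ) : Quaternion ℝ :=
  ∫ x : ℝ × ℝ, qexp Qi (-(2 * Real.pi * x.1 * ω.1)) * f x * star (φ (x - b)) *
    qexp Qj (-(2 * Real.pi * x.2 * ω.2))


open Quaternion in
lemma norm_qexp_Qi (t : ℝ) : ‖qexp Qi t‖ = 1 := by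
  have h : normSq (qexp Qi t) = 1 := by
    simp [qexp, Qi, Quaternion.normSq_def', Quaternion.ext_iff]
    change (Real.cos t + Real.sin t * 0) ^ 2 + (Real.sin t * 1) ^ 2 + (Real.sin t * 0) ^ 2 + (Real.sin t * 0) ^ 2 = 1
    simp
  have := Quaternion.normSq_eq_norm_mul_self (qexp Qi t)
  nlinarith [norm_nonneg (qexp Qi t)]

open Quaternion in
lemma norm_qexp_Qj (t : ℝ) : ‖qexp Qj t‖ = 1 := by
  have h : normSq (qexp Qj t) = 1 := by
    simp [qexp, Qj, Quaternion.normSq_def', Quaternion.ext_iff]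
    change (Real.cos t + Real.sin t * 0) ^ 2 + (Real.sin t * 0) ^ 2 + (Real.sin t * 1) ^ 2 + (Real.sin t * 0) ^ 2 = 1
    simp
  have := Quaternion.normSq_eq_norm_mul_self (qexp Qj t)
  nlinarith [norm_nonneg (qexp Qj t)]

lemma gqft_norm_le (φ f : ℝ × ℝ → Quaternion ℝ)
    (hφ : MemLp φ 2 volume) (hf : MemLp f 2 volume)
    (hφn : eLpNorm φ 2 volume = 1) (hfn : eLpNorm f 2 volume = 1)
    (ω b : ℝ × ℝ) : ‖GQFT φ f ω b‖ ≤ 1 := by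
  have hmp : MeasurePreserving (fun x : ℝ × ℝ => x - b) volume volume :=
    measurePreserving_sub_right volume b
  have hφb : AEStronglyMeasurable (fun x : ℝ × ℝ => φ (x - b)) volume :=
    hφ.aestronglyMeasurable.comp_measurePreserving hmp
  have hφbn : eLpNorm (fun x : ℝ × ℝ => φ (x - b)) 2 volume = 1 := by
    rw [show (fun x : ℝ × ℝ => φ (x - b)) = φ ∘ (fun x => x - b) from rfl,
      eLpNorm_comp_measurePreserving hφ.aestronglyMeasurable hmp, hφn]
  calc ‖GQFT φ f ω b‖
      ≤ (∫⁻ x : ℝ × ℝ, ENNReal.ofReal ‖qexp Qi (-(2 * Real.pi * x.1 * ω.1)) * f x *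
          star (φ (x - b)) * qexp Qj (-(2 * Real.pi * x.2 * ω.2))‖).toReal :=
        norm_integral_le_lintegral_norm _
    _ ≤ 1 := by
        have hle : (∫⁻ x : ℝ × ℝ, ENNReal.ofReal ‖qexp Qi (-(2 * Real.pi * x.1 * ω.1)) * f x *
            star (φ (x - b)) * qexp Qj (-(2 * Real.pi * x.2 * ω.2))‖) ≤ 1 := by
          have heq : ∀ x : ℝ × ℝ, ENNReal.ofReal ‖qexp Qi (-(2 * Real.pi * x.1 * ω.1)) * f x *
              star (φ (x - b)) * qexp Qj (-(2 * Real.pi * x.2 * ω.2))‖ =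
              ((fun x : ℝ × ℝ => (‖f x‖₊ : ℝ≥0∞)) * fun x => (‖φ (x - b)‖₊ : ℝ≥0∞)) x := by
            intro x
            simp only [Pi.mul_apply, ← ENNReal.ofReal_coe_nnreal, coe_nnnorm,
              ← ENNReal.ofReal_mul (norm_nonneg _)]
            congr 1
            rw [norm_mul, norm_mul, norm_mul, norm_qexp_Qi, norm_qexp_Qj, norm_star]
            ring
          rw [lintegral_congr heq]
          calc ∫⁻ x, ((fun x : ℝ × ℝ => (‖f x‖₊ : ℝ≥0∞)) * fun x => (‖φ (x - b)‖₊ : ℝ≥0∞)) x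
              ≤ (∫⁻ x, (‖f x‖₊ : ℝ≥0∞) ^ (2:ℝ)) ^ (1/(2:ℝ)) *
                (∫⁻ x, (‖φ (x - b)‖₊ : ℝ≥0∞) ^ (2:ℝ)) ^ (1/(2:ℝ)) :=
              ENNReal.lintegral_mul_le_Lp_mul_Lq volume (⟨by norm_num, by norm_num, by norm_num⟩)
                hf.aestronglyMeasurable.enorm hφb.enorm
            _ = eLpNorm f 2 volume * eLpNorm (fun x : ℝ × ℝ => φ (x - b)) 2 volume := by
                rw [eLpNorm_eq_lintegral_rpow_enorm_toReal (by norm_num) (by norm_num),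
                  eLpNorm_eq_lintegral_rpow_enorm_toReal (by norm_num) (by norm_num)]
                norm_num
                rfl
            _ = 1 := by rw [hfn, hφbn, mul_one]
        calc (∫⁻ x : ℝ × ℝ, ENNReal.ofReal _).toReal ≤ (1 : ℝ≥0∞).toReal :=
              ENNReal.toReal_mono one_ne_top hle
          _ = 1 := by simp

/-- Concentration of the GQFT of a normalized pair on a set Σ forces m(Σ) ≥ 1 - ε. -/
theorem gqft_concentration_measure (φ f : ℝ × ℝ → Quaternion ℝ)
    (hφ : MemLp φ 2 volume) (hf : MemLp f 2 volume)
    (hφn : eLpNorm φ 2 volume = 1) (hfn : eLpNorm f 2 volume = 1)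
    (E : Set ((ℝ × ℝ) × (ℝ × ℝ))) (hE : MeasurableSet E)
    (ε : ℝ) (hε0 : 0 ≤ ε) (hε1 : ε < 1)
    (hconc : 1 - ε ≤ ∫ z in E, ‖GQFT φ f z.1 z.2‖ ^ 2) :
    ENNReal.ofReal (1 - ε) ≤ volume E := by
  by_cases htop : volume E = ∞
  · rw [htop]; exact le_top
  by_cases hint : IntegrableOn (fun z : (ℝ × ℝ) × (ℝ × ℝ) => ‖GQFT φ f z.1 z.2‖ ^ 2) E volume
  · have hb : ∀ z : (ℝ × ℝ) × (ℝ × ℝ), ‖GQFT φ f z.1 z.2‖ ^ 2 ≤ 1 := fun z =>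
      pow_le_one₀ (norm_nonneg _) (gqft_norm_le φ f hφ hf hφn hfn z.1 z.2)
    have h1 : (∫ z in E, ‖GQFT φ f z.1 z.2‖ ^ 2) ≤ ∫ _z in E, (1:ℝ) := by
      refine integral_mono hint ?_ fun z => hb z
      exact integrableOn_const htop
    rw [setIntegral_const, smul_eq_mul, mul_one] at h1
    have h2 : 1 - ε ≤ (volume E).toReal := le_trans hconc h1
    calc ENNReal.ofReal (1 - ε) ≤ ENNReal.ofReal (volume E).toReal :=
          ENNReal.ofReal_le_ofReal h2
      _ = volume E := ENNReal.ofReal_toReal htop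
  · rw [integral_undef hint] at hconc
    linarith
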